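/- Let X be a set with a reflexive and transitive convergence a : U X ⇸ X, let u, v ∈ ℝ≥0∞ and let 𝔛 ∈ U(U X). Then the map φ_{u,v} : X → ℝ≥0∞ defined by φ_{u,v}(x) = ⨅_{𝔵 ∈ U X} ( max u (a 𝔵 x) + max v (Ū a 𝔛 𝔵) ) is a contraction into [0,∞]: for all 𝔷 ∈ U X and x ∈ X, a 𝔷 x ≥ φ_{u,v}(x) ⊖ ξ (U φ_{u,v} 𝔷). -/

import Mathlib

open scoped ENNReal
open CategoryTheory

noncomputable section

/-- The extension `Ū r` of a numerical relation `r : X ⇸ Y` to ultrafilters: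
`Ū r (𝔵, 𝔶) = ⨆_{A ∈ 𝔵} ⨆_{B ∈ 𝔶} ⨅_{x ∈ A} ⨅_{y ∈ B} r x y`. -/
def uExt {X Y : Type*} (r : X → Y → ℝ≥0∞) (𝔵 : Ultrafilter X) (𝔶 : Ultrafilter Y) : ℝ≥0∞ :=
  ⨆ A ∈ 𝔵, ⨆ B ∈ 𝔶, ⨅ x ∈ A, ⨅ y ∈ B, r x y

/-- The multiplication `m_X : U (U X) → U X` of the ultrafilter monad:
`m_X 𝔛 = {A ⊆ X | {𝔞 ∈ U X | A ∈ 𝔞} ∈ 𝔛}`. -/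
def mU {X : Type*} (𝔛 : Ultrafilter (Ultrafilter X)) : Ultrafilter X :=
  𝔛.bind id

/-- `ξ : U [0,∞] → [0,∞]`, `ξ 𝔳 = ⨆_{A ∈ 𝔳} ⨅_{u ∈ A} u`. -/
def xi (𝔳 : Ultrafilter ℝ≥0∞) : ℝ≥0∞ :=
  ⨆ A ∈ 𝔳, ⨅ u ∈ A, u

/-- `δ : P X × X → [0,∞]` is an approach distance. -/
structure IsApproachDistance {X : Type*} (δ : Set X → X → ℝ≥0∞) : Prop where
  dist_singleton : ∀ x : X, δ {x} x = 0
  dist_empty : ∀ x : X, δ (∅ : Set X) x = ∞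
  dist_union : ∀ (A B : Set X) (x : X), δ (A ∪ B) x = min (δ A x) (δ B x)
  dist_closure : ∀ (A : Set X) (x : X) (ε : ℝ≥0∞), δ A x ≤ δ {y | δ A y ≤ ε} x + ε

/-- The ultrafilter convergence associated to a distance function `δ`:
`a 𝔵 x = ⨆_{A ∈ 𝔵} δ A x`. -/
def appConv {X : Type*} (δ : Set X → X → ℝ≥0∞) (𝔵 : Ultrafilter X) (x : X) : ℝ≥0∞ :=
  ⨆ A ∈ 𝔵, δ A x

/-- `f : X → Y` is a contraction with respect to convergences `a` and `b`:
`a 𝔵 x ≥ b (U f 𝔵) (f x)`. -/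
def IsContraction {X Y : Type*} (a : Ultrafilter X → X → ℝ≥0∞)
    (b : Ultrafilter Y → Y → ℝ≥0∞) (f : X → Y) : Prop :=
  ∀ (𝔵 : Ultrafilter X) (x : X), b (Ultrafilter.map f 𝔵) (f x) ≤ a 𝔵 x

/-- The approach convergence on `[0,∞]`: `λ(𝔳, v) = v ⊖ ξ 𝔳` (truncated subtraction). -/
def ennConv (𝔳 : Ultrafilter ℝ≥0∞) (v : ℝ≥0∞) : ℝ≥0∞ :=
  v - xi 𝔳

/-- The set `[0,∞]^X` of contractions `φ : X → [0,∞]`, for a convergence `a` on `X`. -/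
def Contractions {X : Type*} (a : Ultrafilter X → X → ℝ≥0∞) : Type _ :=
  {φ : X → ℝ≥0∞ // IsContraction a ennConv φ}

/-- The evaluation map `ev : [0,∞]^X × X → [0,∞]`. -/
def evMap {X : Type*} (a : Ultrafilter X → X → ℝ≥0∞) : Contractions a × X → ℝ≥0∞ :=
  fun p => p.1.1 p.2

/-- The exponential convergence `d` on `[0,∞]^X`:
`d(𝔭,φ) = inf {u | ∀ 𝔮 ∈ U([0,∞]^X × X) with U π₁ 𝔮 = 𝔭, ∀ x ∈ X,`
`u ∨ a (U π₂ 𝔮) x + ξ (U ev 𝔮) ≥ φ x}`. -/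
def dExp {X : Type*} (a : Ultrafilter X → X → ℝ≥0∞) :
    Ultrafilter (Contractions a) → Contractions a → ℝ≥0∞ :=
  fun 𝔭 φ => sInf {u : ℝ≥0∞ | ∀ 𝔮 : Ultrafilter (Contractions a × X),
    Ultrafilter.map Prod.fst 𝔮 = 𝔭 → ∀ x : X,
      φ.1 x ≤ max u (a (Ultrafilter.map Prod.snd 𝔮) x) + xi (Ultrafilter.map (evMap a) 𝔮)}

/-- A convergence relation `a : U X ⇸ X` is transitive:
`Ū a 𝔛 𝔵 + a 𝔵 x ≥ a (m_X 𝔛) x`. -/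
def IsTransitiveConv {X : Type*} (a : Ultrafilter X → X → ℝ≥0∞) : Prop :=
  ∀ (𝔛 : Ultrafilter (Ultrafilter X)) (𝔵 : Ultrafilter X) (x : X),
    a (mU 𝔛) x ≤ uExt a 𝔛 𝔵 + a 𝔵 x

/-- A convergence relation `a : U X ⇸ X` is reflexive: `a (e_X x) x = 0`. -/
def IsReflexiveConv {X : Type*} (a : Ultrafilter X → X → ℝ≥0∞) : Prop :=
  ∀ x : X, a (pure x : Ultrafilter X) x = 0

/-- For a reflexive and transitive convergence `a : U X ⇸ X`, `u v ∈ [0,∞]`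
and `𝔛 ∈ U (U X)`, the map `φ_{u,v}(x) = ⨅_{𝔵 ∈ U X} ((u ∨ a 𝔵 x) + (v ∨ Ū a 𝔛 𝔵))` is a
contraction into `[0,∞]`. -/
lemma mem_mU {X : Type*} {𝔜 : Ultrafilter (Ultrafilter X)} {A : Set X} :
    A ∈ mU 𝔜 ↔ {𝔶 : Ultrafilter X | A ∈ 𝔶} ∈ 𝔜 := by
  rw [← Ultrafilter.mem_coe,
    show ((mU 𝔜 : Ultrafilter X) : Filter X)
      = (↑𝔜 : Filter (Ultrafilter X)).bind (fun 𝔶 => ↑𝔶) from rfl,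
    Filter.mem_bind']
  rfl

lemma xi_map {X : Type*} (φ : X → ℝ≥0∞) (𝔷 : Ultrafilter X) :
    xi (Ultrafilter.map φ 𝔷) = ⨆ B ∈ 𝔷, ⨅ y ∈ B, φ y := by
  apply le_antisymm
  · refine iSup₂_le fun A hA => ?_
    rw [Ultrafilter.mem_map] at hA
    refine le_trans ?_ (le_biSup _ hA)
    exact le_iInf₂ fun y hy => biInf_le _ hy
  · refine iSup₂_le fun B hB => ?_
    have h1 : φ '' B ∈ Ultrafilter.map φ 𝔷 :=
      Ultrafilter.mem_map.mpr (𝔷.sets_of_superset hB (Set.subset_preimage_image φ B))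
    refine le_trans ?_ (le_biSup _ h1)
    rw [iInf_image]

theorem phi_u_v_isContraction (X : Type*) (a : Ultrafilter X → X → ℝ≥0∞)
    (hrefl : IsReflexiveConv a) (htrans : IsTransitiveConv a)
    (u v : ℝ≥0∞) (𝔛 : Ultrafilter (Ultrafilter X)) (φ : X → ℝ≥0∞)
    (hφ : ∀ x : X, φ x = ⨅ 𝔵 : Ultrafilter X, (max u (a 𝔵 x) + max v (uExt a 𝔛 𝔵))) :
    ∀ (𝔷 : Ultrafilter X) (x : X), φ x - xi (Ultrafilter.map φ 𝔷) ≤ a 𝔷 x := by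
  intro 𝔷 x
  rw [tsub_le_iff_right, add_comm, xi_map]
  apply ENNReal.le_of_forall_pos_le_add
  intro ε hε _
  -- choose g
  have hg : ∀ y : X, ∃ 𝔶 : Ultrafilter X,
      max u (a 𝔶 y) + max v (uExt a 𝔛 𝔶) ≤ φ y + ε := by
    intro y
    by_cases hy : φ y = ∞
    · exact ⟨pure y, by simp [hy]⟩
    · have : φ y < φ y + ε := ENNReal.lt_add_right hy (by exact_mod_cast hε.ne')
      rw (occs := .pos [1]) [hφ y] at this
      obtain ⟨𝔶, h𝔶⟩ := iInf_lt_iff.mp this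
      exact ⟨𝔶, h𝔶.le⟩
  choose g hg using hg
  set 𝔵 : Ultrafilter X := mU (Ultrafilter.map g 𝔷) with h𝔵
  -- step 1: transitivity
  have step1 : a 𝔵 x ≤ uExt a (Ultrafilter.map g 𝔷) 𝔷 + a 𝔷 x := htrans _ 𝔷 x
  -- step 2
  have step2 : uExt a (Ultrafilter.map g 𝔷) 𝔷 ≤ ⨆ C ∈ 𝔷, ⨅ y ∈ C, a (g y) y := by
    refine iSup₂_le fun A hA => iSup₂_le fun B hB => ?_
    rw [Ultrafilter.mem_map] at hA
    refine le_trans ?_ (le_biSup _ (𝔷.toFilter.inter_mem hA hB))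
    refine le_iInf₂ fun y hy => ?_
    exact le_trans (biInf_le _ hy.1) (biInf_le _ hy.2)
  -- step 3
  have step3 : uExt a 𝔛 𝔵 ≤ ⨆ C ∈ 𝔷, ⨅ y ∈ C, uExt a 𝔛 (g y) := by
    refine iSup₂_le fun 𝒜 h𝒜 => iSup₂_le fun A hA => ?_
    rw [h𝔵, mem_mU, Ultrafilter.mem_map] at hA
    refine le_trans ?_ (le_biSup _ hA)
    refine le_iInf₂ fun y hy => ?_
    exact le_iSup₂_of_le 𝒜 h𝒜 (le_iSup₂_of_le A hy le_rfl)
  -- combine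
  calc φ x ≤ max u (a 𝔵 x) + max v (uExt a 𝔛 𝔵) := (hφ x) ▸ iInf_le _ 𝔵
    _ ≤ max u (uExt a (Ultrafilter.map g 𝔷) 𝔷 + a 𝔷 x) + max v (uExt a 𝔛 𝔵) := by
        gcongr
    _ ≤ (a 𝔷 x + max u (uExt a (Ultrafilter.map g 𝔷) 𝔷)) + max v (uExt a 𝔛 𝔵) := by
        gcongr
        exact max_le (le_add_left (le_max_left _ _)) (by rw [add_comm]; gcongr; exact le_max_right _ _)
    _ ≤ a 𝔷 x + ((max u (⨆ C ∈ 𝔷, ⨅ y ∈ C, a (g y) y))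
          + max v (⨆ C ∈ 𝔷, ⨅ y ∈ C, uExt a 𝔛 (g y))) := by
        rw [add_assoc]; gcongr
    _ ≤ a 𝔷 x + ((⨆ B ∈ 𝔷, ⨅ y ∈ B, φ y) + ε) := by
        gcongr ?_ + ?_
        · exact le_rfl
        -- bound max-sum by biSup of φ + ε
        have hT1 : max u (⨆ C ∈ 𝔷, ⨅ y ∈ C, a (g y) y)
            ≤ ⨆ C ∈ 𝔷, ⨅ y ∈ C, max u (a (g y) y) := by
          refine max_le ?_ (iSup₂_mono fun C hC => iInf₂_mono fun y hy => le_max_right _ _)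
          refine le_trans ?_ (le_biSup _ (𝔷.toFilter.univ_mem))
          exact le_iInf₂ fun y _ => le_max_left _ _
        have hT2 : max v (⨆ C ∈ 𝔷, ⨅ y ∈ C, uExt a 𝔛 (g y))
            ≤ ⨆ C ∈ 𝔷, ⨅ y ∈ C, max v (uExt a 𝔛 (g y)) := by
          refine max_le ?_ (iSup₂_mono fun C hC => iInf₂_mono fun y hy => le_max_right _ _)
          refine le_trans ?_ (le_biSup _ (𝔷.toFilter.univ_mem))
          exact le_iInf₂ fun y _ => le_max_left _ _
        have hsum := add_le_add hT1 hT2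
        refine hsum.trans ?_
        refine ENNReal.biSup_add_biSup_le ⟨_, 𝔷.toFilter.univ_mem⟩ ⟨_, 𝔷.toFilter.univ_mem⟩
          fun C₁ hC₁ C₂ hC₂ => ?_
        have key : (⨅ y ∈ C₁, max u (a (g y) y)) + (⨅ y ∈ C₂, max v (uExt a 𝔛 (g y)))
            ≤ ⨅ y ∈ C₁ ∩ C₂, (φ y + ε) := by
          refine le_iInf₂ fun y hy => ?_
          refine le_trans (add_le_add (biInf_le _ hy.1) (biInf_le _ hy.2)) (hg y)
        refine le_trans key ?_
        refine le_trans ?_ (add_le_add_left (le_biSup _ (𝔷.toFilter.inter_mem hC₁ hC₂)) (ε:ℝ≥0∞))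
        simp_rw [ENNReal.iInf_add]
        rfl
    _ = (⨆ B ∈ 𝔷, ⨅ y ∈ B, φ y) + a 𝔷 x + ε := by ring


end
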